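/- For bounded operators X, Y on a complex Hilbert space H, the numerical radius of [[O, X],[Y, O]] on H ⊕ H equals (1/2)·sup over real θ of ‖e^{iθ}X + e^{-iθ}Y*‖. -/

import Mathlib

open scoped InnerProductSpace
open ContinuousLinearMap
noncomputable section
set_option synthInstance.maxHeartbeats 1000000
set_option maxHeartbeats 1000000

variable {H : Type*} [NormedAddCommGroup H] [InnerProductSpace ℂ H] [CompleteSpace H]

/-- The numerical radius of a bounded operator. -/
noncomputable def numRadius (T : H →L[ℂ] H) : ℝ :=
  sSup {r : ℝ | ∃ x : H, ‖x‖ = 1 ∧ r = ‖(⟪T x, x⟫_ℂ)‖}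

/-- The 2×2 block operator [[X, Y],[Z, W]] on H ⊕ H (ℓ² direct sum). -/
noncomputable def blockOp (X Y Z W : H →L[ℂ] H) :
    WithLp 2 (H × H) →L[ℂ] WithLp 2 (H × H) :=
  ((WithLp.prodContinuousLinearEquiv 2 ℂ H H).symm.toContinuousLinearMap) ∘L
    ((X ∘L ContinuousLinearMap.fst ℂ H H + Y ∘L ContinuousLinearMap.snd ℂ H H).prod
      (Z ∘L ContinuousLinearMap.fst ℂ H H + W ∘L ContinuousLinearMap.snd ℂ H H)) ∘L
    ((WithLp.prodContinuousLinearEquiv 2 ℂ H H).toContinuousLinearMap)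


lemma lemA (a b : ℂ) : ∃ θ : ℝ, ‖Complex.exp (θ*Complex.I) * a + Complex.exp (-(θ*Complex.I)) * b‖ = ‖a‖ + ‖b‖ := by
  refine ⟨(b.arg - a.arg)/2, ?_⟩
  have ha := Complex.norm_mul_exp_arg_mul_I a
  have hb := Complex.norm_mul_exp_arg_mul_I b
  set θ : ℝ := (b.arg - a.arg)/2 with hθ
  set m : ℝ := (a.arg + b.arg)/2 with hm
  have h1 : Complex.exp (θ*Complex.I) * a = (‖a‖ : ℂ) * Complex.exp (m*Complex.I) := by
    conv_lhs => rw [← ha]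
    rw [← mul_assoc, mul_comm (Complex.exp _), mul_assoc, ← Complex.exp_add]
    congr 1
    rw [← add_mul]
    congr 1
    push_cast [hθ, hm]; ring
  have h2 : Complex.exp (-(θ*Complex.I)) * b = (‖b‖ : ℂ) * Complex.exp (m*Complex.I) := by
    conv_lhs => rw [← hb]
    rw [← mul_assoc, mul_comm (Complex.exp _), mul_assoc, ← Complex.exp_add]
    congr 1
    rw [show (-((θ:ℂ)*Complex.I) + (b.arg:ℝ)*Complex.I) = ((b.arg - θ : ℝ) : ℂ)*Complex.I by push_cast; ring]
    congr 1
    push_cast [hθ, hm]; ring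
  rw [h1, h2, ← add_mul, norm_mul, Complex.norm_exp_ofReal_mul_I, mul_one]
  rw [show ((‖a‖ : ℂ) + (‖b‖ : ℂ)) = ((‖a‖ + ‖b‖ : ℝ) : ℂ) by push_cast; ring]
  rw [Complex.norm_real, Real.norm_eq_abs]
  exact abs_of_nonneg (by positivity)

lemma conj_exp_I (θ : ℝ) : (starRingEnd ℂ) (Complex.exp (θ*Complex.I)) = Complex.exp (-(θ*Complex.I)) := by
  rw [← Complex.exp_conj]
  congr 1
  simp [Complex.conj_ofReal]

lemma conj_exp_I' (θ : ℝ) : (starRingEnd ℂ) (Complex.exp (-(θ*Complex.I))) = Complex.exp (θ*Complex.I) := by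
  rw [← Complex.exp_conj]
  congr 1
  simp [Complex.conj_ofReal]

lemma norm_exp_I (θ : ℝ) : ‖Complex.exp (θ*Complex.I)‖ = 1 := by
  rw [Complex.norm_exp_ofReal_mul_I]

lemma norm_exp_I' (θ : ℝ) : ‖Complex.exp (-(θ*Complex.I))‖ = 1 := by
  rw [show (-((θ:ℂ)*Complex.I)) = ((-θ : ℝ):ℂ)*Complex.I by push_cast; ring,
    Complex.norm_exp_ofReal_mul_I]

lemma innerZ (X Y : H →L[ℂ] H) (θ : ℝ) (u v : H) :
    ⟪(Complex.exp (θ*Complex.I) • X + Complex.exp (-(θ*Complex.I)) • adjoint Y) v, u⟫_ℂ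
      = Complex.exp (-(θ*Complex.I)) * ⟪X v, u⟫_ℂ + Complex.exp (θ*Complex.I) * ⟪adjoint Y v, u⟫_ℂ := by
  rw [ContinuousLinearMap.add_apply, ContinuousLinearMap.smul_apply, ContinuousLinearMap.smul_apply,
    inner_add_left, inner_smul_left, inner_smul_left, conj_exp_I, conj_exp_I']

lemma blockOp_inner (X Y : H →L[ℂ] H) (x : WithLp 2 (H × H)) :
    ⟪blockOp 0 X Y 0 x, x⟫_ℂ = ⟪X x.snd, x.fst⟫_ℂ + ⟪Y x.fst, x.snd⟫_ℂ := by
  rw [WithLp.prod_inner_apply]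
  simp [blockOp]

lemma lemC (X Y : H →L[ℂ] H) (u v : H) (hu : ‖u‖ = 1) (hv : ‖v‖ = 1) :
    ∃ x : WithLp 2 (H × H), ‖x‖ = 1 ∧
      ‖(⟪blockOp 0 X Y 0 x, x⟫_ℂ)‖
        = (‖⟪X v, u⟫_ℂ‖ + ‖⟪adjoint Y v, u⟫_ℂ‖)/2 := by
  set a := (⟪X v, u⟫_ℂ) with ha
  set b := (⟪adjoint Y v, u⟫_ℂ) with hb
  obtain ⟨φ, hφ⟩ := lemA ((starRingEnd ℂ) a) b
  set c := Complex.exp (φ*Complex.I) with hc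
  set s : ℂ := (((Real.sqrt 2)⁻¹ : ℝ) : ℂ) with hs
  refine ⟨(WithLp.equiv 2 (H × H)).symm (s•u, (s*c)•v), ?_, ?_⟩
  · have hns : ‖s‖ = (Real.sqrt 2)⁻¹ := by
      rw [hs, Complex.norm_real, Real.norm_eq_abs, abs_of_nonneg (by positivity)]
    have hnc : ‖c‖ = 1 := norm_exp_I φ
    have h2 : ‖(WithLp.equiv 2 (H × H)).symm (s•u, (s*c)•v)‖^2 = 1 := by
      rw [WithLp.prod_norm_sq_eq_of_L2]
      simp only [WithLp.equiv_symm_apply, WithLp.toLp_fst, WithLp.toLp_snd]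
      rw [norm_smul, norm_smul, norm_mul, hns, hnc, hu, hv]
      have h2' : (Real.sqrt 2)^2 = 2 := Real.sq_sqrt (by norm_num)
      have hpos : (0:ℝ) < Real.sqrt 2 := by positivity
      field_simp
      linarith [h2']
    nlinarith [norm_nonneg ((WithLp.equiv 2 (H × H)).symm (s•u, (s*c)•v))]
  · rw [blockOp_inner]
    simp only [WithLp.equiv_symm_apply, WithLp.toLp_fst, WithLp.toLp_snd]
    rw [map_smul, map_smul, inner_smul_left, inner_smul_left, inner_smul_right, inner_smul_right]
    have hYb : ⟪Y u, v⟫_ℂ = (starRingEnd ℂ) b := by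
      rw [hb, adjoint_inner_left, ← inner_conj_symm]
    rw [hYb, ← ha]
    have hconjs : (starRingEnd ℂ) s = s := by rw [hs, Complex.conj_ofReal]
    have hrw : (starRingEnd ℂ) (s * c) * (s * a) + (starRingEnd ℂ) s * (s * c * (starRingEnd ℂ) b)
        = s^2 * ((starRingEnd ℂ) c * a + c * (starRingEnd ℂ) b) := by
      rw [map_mul, hconjs]; ring
    rw [hrw]
    have habs : ‖(starRingEnd ℂ) c * a + c * (starRingEnd ℂ) b‖
        = ‖a‖ + ‖b‖ := by
      have : (starRingEnd ℂ) c * a + c * (starRingEnd ℂ) b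
          = (starRingEnd ℂ) (c * (starRingEnd ℂ) a + (starRingEnd ℂ) c * b) := by
        rw [map_add, map_mul, map_mul]; simp
      rw [this, Complex.norm_conj]
      rw [hc, conj_exp_I] at *
      calc ‖Complex.exp (↑φ * Complex.I) * (starRingEnd ℂ) a
            + Complex.exp (-(↑φ * Complex.I)) * b‖
          = ‖(starRingEnd ℂ) a‖ + ‖b‖ := hφ
        _ = ‖a‖ + ‖b‖ := by rw [Complex.norm_conj]
    have hs2 : s^2 = ((1/2 : ℝ) : ℂ) := by
      rw [hs]
      push_cast
      rw [show ((Real.sqrt 2 : ℝ) : ℂ)⁻¹^2 = (((Real.sqrt 2 : ℝ) : ℂ)^2)⁻¹ by ring]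
      norm_cast
      rw [Real.sq_sqrt (by norm_num : (2:ℝ) ≥ 0)]
      norm_num
    rw [norm_mul, hs2, habs]
    rw [Complex.norm_real, Real.norm_eq_abs]
    rw [abs_of_nonneg (by norm_num : (0:ℝ) ≤ 1/2)]
    ring


theorem numRadius_offdiag_sup (X Y : H →L[ℂ] H) :
    numRadius (blockOp 0 X Y 0) =
      (1 / 2) * sSup {c : ℝ | ∃ θ : ℝ,
        c = ‖Complex.exp (θ * Complex.I) • X +
              Complex.exp (-(θ * Complex.I)) • adjoint Y‖} := by
  have Zdef : ∀ θ : ℝ, Complex.exp (θ * Complex.I) • X +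
      Complex.exp (-(θ * Complex.I)) • adjoint Y
      = Complex.exp (θ * Complex.I) • X + Complex.exp (-(θ * Complex.I)) • adjoint Y := fun _ => rfl
  set T := blockOp 0 X Y 0 with hT
  rcases subsingleton_or_nontrivial H with hH | hH
  · -- trivial case
    have h1 : {r : ℝ | ∃ x : WithLp 2 (H × H), ‖x‖ = 1 ∧ r = ‖(⟪T x, x⟫_ℂ)‖} = ∅ := by
      ext r
      simp only [Set.mem_setOf_eq, Set.mem_empty_iff_false, iff_false, not_exists]
      rintro x ⟨hx, -⟩
      haveI : Subsingleton (WithLp 2 (H × H)) := (WithLp.equiv 2 (H × H)).subsingleton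
      have hx0 : x = 0 := Subsingleton.elim x 0
      rw [hx0, norm_zero] at hx
      norm_num at hx
    have h2 : {c : ℝ | ∃ θ : ℝ, c = ‖Complex.exp (θ * Complex.I) • X +
        Complex.exp (-(θ * Complex.I)) • adjoint Y‖} = {0} := by
      ext cc
      simp only [Set.mem_setOf_eq, Set.mem_singleton_iff]
      constructor
      · rintro ⟨θ, rfl⟩
        rw [show (Complex.exp (θ * Complex.I) • X + Complex.exp (-(θ * Complex.I)) • adjoint Y)
          = 0 from Subsingleton.elim _ _, norm_zero]
      · rintro rfl
        exact ⟨0, by rw [show (Complex.exp ((0:ℝ) * Complex.I) • X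
          + Complex.exp (-((0:ℝ) * Complex.I)) • adjoint Y) = 0 from Subsingleton.elim _ _,
          norm_zero]⟩
    rw [numRadius, h1, h2, Real.sSup_empty, csSup_singleton]
    ring
  · -- nontrivial case
    set S1 := {r : ℝ | ∃ x : WithLp 2 (H × H), ‖x‖ = 1 ∧ r = ‖(⟪T x, x⟫_ℂ)‖} with hS1
    set S2 := {c : ℝ | ∃ θ : ℝ, c = ‖Complex.exp (θ * Complex.I) • X +
        Complex.exp (-(θ * Complex.I)) • adjoint Y‖} with hS2
    have hbdd1 : BddAbove S1 := by
      refine ⟨‖T‖, ?_⟩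
      rintro r ⟨x, hx, rfl⟩
      have h1 := norm_inner_le_norm (𝕜 := ℂ) (T x) x
      have h2 := le_opNorm T x
      rw [hx, mul_one] at h1 h2
      linarith
    have hbdd2 : BddAbove S2 := by
      refine ⟨‖X‖ + ‖adjoint Y‖, ?_⟩
      rintro c ⟨θ, rfl⟩
      refine le_trans (norm_add_le _ _) ?_
      rw [norm_smul, norm_smul, norm_exp_I, norm_exp_I', one_mul, one_mul]
    have hne2 : S2.Nonempty := ⟨_, 0, rfl⟩
    obtain ⟨e₀, he₀⟩ := exists_norm_eq H (le_of_lt one_pos)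
    have hne1 : S1.Nonempty := by
      refine ⟨_, (WithLp.equiv 2 (H × H)).symm (e₀, 0), ?_, rfl⟩
      rw [WithLp.equiv_symm_apply, WithLp.norm_toLp_fst, he₀]
    have h0 : 0 ≤ sSup S1 := by
      obtain ⟨r, x, hx, rfl⟩ := hne1
      exact le_trans (norm_nonneg _) (le_csSup hbdd1 ⟨x, hx, rfl⟩)
    rw [show numRadius T = sSup S1 from rfl]
    apply le_antisymm
    · -- sSup S1 ≤ (1/2) * sSup S2
      apply csSup_le hne1
      rintro r ⟨x, hx, rfl⟩
      set a := (⟪X x.snd, x.fst⟫_ℂ) with ha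
      set b := (⟪adjoint Y x.snd, x.fst⟫_ℂ) with hb
      have hTx : ⟪T x, x⟫_ℂ = a + (starRingEnd ℂ) b := by
        rw [hT, blockOp_inner, hb, adjoint_inner_left, inner_conj_symm]
      obtain ⟨θ₁, hθ₁⟩ := lemA a b
      have step1 : ‖(⟪T x, x⟫_ℂ)‖ ≤ ‖a‖ + ‖b‖ := by
        rw [hTx]
        refine le_trans (norm_add_le _ _) ?_
        rw [Complex.norm_conj]
      have hinner : (⟪(Complex.exp ((-θ₁ : ℝ) * Complex.I) • X +
          Complex.exp (-((-θ₁ : ℝ) * Complex.I)) • adjoint Y) x.snd, x.fst⟫_ℂ)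
          = Complex.exp (θ₁ * Complex.I) * a + Complex.exp (-(θ₁ * Complex.I)) * b := by
        rw [innerZ, ← ha, ← hb]
        rw [show ((-θ₁ : ℝ) : ℂ) * Complex.I = -((θ₁:ℝ) * Complex.I) by push_cast; ring, neg_neg]
      have step2 : ‖a‖ + ‖b‖ ≤ ‖(Complex.exp ((-θ₁ : ℝ) * Complex.I) • X +
          Complex.exp (-((-θ₁ : ℝ) * Complex.I)) • adjoint Y)‖ / 2 := by
        have hnormsq : ‖x.fst‖^2 + ‖x.snd‖^2 = 1 := by
          rw [← WithLp.prod_norm_sq_eq_of_L2, hx]; norm_num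
        set Zop := (Complex.exp ((-θ₁ : ℝ) * Complex.I) • X +
          Complex.exp (-((-θ₁ : ℝ) * Complex.I)) • adjoint Y) with hZop
        have c1 : ‖a‖ + ‖b‖ = ‖(⟪Zop x.snd, x.fst⟫_ℂ)‖ := by
          rw [hinner, hθ₁]
        have c2 := norm_inner_le_norm (𝕜 := ℂ) (Zop x.snd) x.fst
        have c3 := le_opNorm Zop x.snd
        have c4 : ‖Zop x.snd‖ * ‖x.fst‖ ≤ ‖Zop‖ * ‖x.snd‖ * ‖x.fst‖ := by
          have := norm_nonneg x.fst
          nlinarith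
        have c5 : ‖Zop‖ * ‖x.snd‖ * ‖x.fst‖ ≤ ‖Zop‖ / 2 := by
          nlinarith [norm_nonneg Zop, sq_nonneg (‖x.fst‖ - ‖x.snd‖), norm_nonneg x.fst,
            norm_nonneg x.snd]
        linarith [c1, c2, c3, c4, c5]
      have step3 : ‖(Complex.exp ((-θ₁ : ℝ) * Complex.I) • X +
          Complex.exp (-((-θ₁ : ℝ) * Complex.I)) • adjoint Y)‖ ≤ sSup S2 :=
        le_csSup hbdd2 ⟨-θ₁, rfl⟩
      linarith
    · -- (1/2) * sSup S2 ≤ sSup S1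
      have hmain : sSup S2 ≤ 2 * sSup S1 := by
        apply csSup_le hne2
        rintro cc ⟨θ, rfl⟩
        set Zop := (Complex.exp ((θ : ℝ) * Complex.I) • X +
          Complex.exp (-((θ : ℝ) * Complex.I)) • adjoint Y) with hZop
        have key : ∀ w : H, ‖w‖ = 1 → ‖Zop w‖ ≤ 2 * sSup S1 := by
          intro w hw
          by_cases hzw : Zop w = 0
          · rw [hzw, norm_zero]; linarith
          · set u := ((‖Zop w‖⁻¹ : ℝ) : ℂ) • Zop w with hu'
            have hnz : ‖Zop w‖ ≠ 0 := norm_ne_zero_iff.mpr hzw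
            have hu : ‖u‖ = 1 := by
              rw [hu', norm_smul, Complex.norm_real, Real.norm_eq_abs,
                abs_of_nonneg (by positivity)]
              field_simp
            have hinner : (⟪Zop w, u⟫_ℂ) = ((‖Zop w‖ : ℝ) : ℂ) := by
              rw [hu', inner_smul_right, inner_self_eq_norm_sq_to_K]
              have hcz : ((‖Zop w‖ : ℝ) : ℂ) ≠ 0 := by exact_mod_cast hnz
              push_cast
              rw [pow_two, ← mul_assoc]
              exact (by rw [inv_mul_cancel₀ hcz, one_mul] : ((‖Zop w‖:ℝ):ℂ)⁻¹ * ((‖Zop w‖:ℝ):ℂ) * ((‖Zop w‖:ℝ):ℂ) = ((‖Zop w‖:ℝ):ℂ))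
            have heq : ‖Zop w‖ = ‖(⟪Zop w, u⟫_ℂ)‖ := by
              rw [hinner, Complex.norm_real, Real.norm_eq_abs, abs_of_nonneg (norm_nonneg _)]
            have hexp : (⟪Zop w, u⟫_ℂ) = Complex.exp (-(θ * Complex.I)) * ⟪X w, u⟫_ℂ
                + Complex.exp (θ * Complex.I) * ⟪adjoint Y w, u⟫_ℂ := by
              rw [hZop, innerZ]
            have hle : ‖Zop w‖ ≤ ‖⟪X w, u⟫_ℂ‖ + ‖⟪adjoint Y w, u⟫_ℂ‖ := by
              rw [heq, hexp]
              refine le_trans (norm_add_le _ _) ?_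
              rw [norm_mul, norm_mul, norm_exp_I, norm_exp_I', one_mul, one_mul]
            obtain ⟨x, hx1, hx2⟩ := lemC X Y u w hu hw
            have hmem : (‖⟪X w, u⟫_ℂ‖ + ‖⟪adjoint Y w, u⟫_ℂ‖)/2 ∈ S1 :=
              ⟨x, hx1, hx2.symm⟩
            have := le_csSup hbdd1 hmem
            linarith
        refine opNorm_le_bound _ (by linarith) ?_
        intro w
        rcases eq_or_ne w 0 with rfl | hw0
        · simp
        · have hnw : ‖w‖ ≠ 0 := norm_ne_zero_iff.mpr hw0
          have hw1 : ‖(((‖w‖⁻¹ : ℝ) : ℂ)) • w‖ = 1 := by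
            rw [norm_smul, Complex.norm_real, Real.norm_eq_abs, abs_of_nonneg (by positivity)]
            field_simp
          have hk := key _ hw1
          rw [map_smul, norm_smul, Complex.norm_real, Real.norm_eq_abs,
            abs_of_nonneg (by positivity)] at hk
          have hwpos : (0:ℝ) < ‖w‖ := lt_of_le_of_ne (norm_nonneg w) (Ne.symm hnw)
          calc ‖Zop w‖ = ‖w‖ * (‖w‖⁻¹ * ‖Zop w‖) := by field_simp
            _ ≤ ‖w‖ * (2 * sSup S1) := by
                apply mul_le_mul_of_nonneg_left hk (le_of_lt hwpos)
            _ = 2 * sSup S1 * ‖w‖ := by ring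
      linarith
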